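/- Forced field-to-fluid correspondence (flat-target instance): let κ ≥ 0, let φ = (φ₁,φ₂) : ℝ³ → ℝ² be a C² map and P̄ : ℝ² → ℝ a C¹ function, and suppose φ is σ_{1,2}-critical with potential P̄, i.e. κ·Δφₐ(x) + τ_{σ₂}(φ)ₐ(x) = (∂ₐP̄)(φ(x)) for a = 1,2 and all x ∈ ℝ³. Then V = ∇φ₁ × ∇φ₂ satisfies the steady forced Euler equations (V·∇)V = −∇p + F and div V = 0 on ℝ³, where p = P̄∘φ − ½|V|² and F is the vector field Fᵢ = κ(Σⱼ ∂ⱼCᵢⱼ − ½ ∂ᵢ|Dφ|²); moreover ⟨F(x), V(x)⟩ = 0 for all x. -/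

import Mathlib

open scoped BigOperators

/-- Partial derivative `∂ⱼ f` of a scalar function on `ℝ³`. -/
noncomputable def pd (j : Fin 3) (f : (Fin 3 → ℝ) → ℝ) (x : Fin 3 → ℝ) : ℝ :=
  fderiv ℝ f x (Pi.single j 1)

/-- Cross product on `ℝ³`. -/
def cross (a b : Fin 3 → ℝ) : Fin 3 → ℝ :=
  ![a 1 * b 2 - a 2 * b 1, a 2 * b 0 - a 0 * b 2, a 0 * b 1 - a 1 * b 0]

/-- Cauchy–Green tensor `Cᵢⱼ = Σₐ ∂ᵢφₐ ∂ⱼφₐ` of a map `φ : ℝ³ → ℝ²`. -/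
noncomputable def CG (φ : Fin 2 → (Fin 3 → ℝ) → ℝ) (i j : Fin 3) (x : Fin 3 → ℝ) : ℝ :=
  ∑ a : Fin 2, pd i (φ a) x * pd j (φ a) x

/-- `|Dφ|² = Σ_{a,i} (∂ᵢφₐ)²`. -/
noncomputable def eDen (φ : Fin 2 → (Fin 3 → ℝ) → ℝ) (x : Fin 3 → ℝ) : ℝ :=
  ∑ a : Fin 2, ∑ i : Fin 3, (pd i (φ a) x) ^ 2

/-- σ₂-tension field `τ_{σ₂}(φ)ₐ = Σⱼ ∂ⱼ(|Dφ|² ∂ⱼφₐ − Σᵢ Cᵢⱼ ∂ᵢφₐ)`. -/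
noncomputable def tau2 (φ : Fin 2 → (Fin 3 → ℝ) → ℝ) (a : Fin 2) (x : Fin 3 → ℝ) : ℝ :=
  ∑ j : Fin 3,
    pd j (fun y => eDen φ y * pd j (φ a) y - ∑ i : Fin 3, CG φ i j y * pd i (φ a) y) x

/-- Laplacian of a scalar function on `ℝ³`. -/
noncomputable def lap (f : (Fin 3 → ℝ) → ℝ) (x : Fin 3 → ℝ) : ℝ :=
  ∑ j : Fin 3, pd j (fun y => pd j f y) x

/-- Fluid velocity `V = ∇φ₁ × ∇φ₂` associated to `φ`. -/
noncomputable def Vfield (φ : Fin 2 → (Fin 3 → ℝ) → ℝ) (x : Fin 3 → ℝ) : Fin 3 → ℝ :=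
  cross (fun i => pd i (φ 0) x) (fun i => pd i (φ 1) x)

/-! ### Auxiliary lemmas -/

theorem pd_const {x : Fin 3 → ℝ} {j : Fin 3} (c : ℝ) :
    pd j (fun _ => c) x = 0 := by
  simp [pd]

theorem pd_add {f g : (Fin 3 → ℝ) → ℝ} {x : Fin 3 → ℝ} {j : Fin 3}
    (hf : DifferentiableAt ℝ f x) (hg : DifferentiableAt ℝ g x) :
    pd j (fun y => f y + g y) x = pd j f x + pd j g x := by
  simp [pd, fderiv_fun_add hf hg]

theorem pd_sub {f g : (Fin 3 → ℝ) → ℝ} {x : Fin 3 → ℝ} {j : Fin 3}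
    (hf : DifferentiableAt ℝ f x) (hg : DifferentiableAt ℝ g x) :
    pd j (fun y => f y - g y) x = pd j f x - pd j g x := by
  simp [pd, fderiv_fun_sub hf hg]

theorem pd_mul {f g : (Fin 3 → ℝ) → ℝ} {x : Fin 3 → ℝ} {j : Fin 3}
    (hf : DifferentiableAt ℝ f x) (hg : DifferentiableAt ℝ g x) :
    pd j (fun y => f y * g y) x = pd j f x * g x + f x * pd j g x := by
  simp [pd, fderiv_fun_mul hf hg]; ring

theorem pd_const_mul {f : (Fin 3 → ℝ) → ℝ} {x : Fin 3 → ℝ} {j : Fin 3} (c : ℝ)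
    (hf : DifferentiableAt ℝ f x) :
    pd j (fun y => c * f y) x = c * pd j f x := by
  simp [pd, fderiv_const_mul hf c]

theorem pd_sq {f : (Fin 3 → ℝ) → ℝ} {x : Fin 3 → ℝ} {j : Fin 3}
    (hf : DifferentiableAt ℝ f x) :
    pd j (fun y => f y ^ 2) x = 2 * f x * pd j f x := by
  have h : (fun y => f y ^ 2) = fun y => f y * f y := by funext y; ring
  rw [h, pd_mul hf hf]; ring

theorem pd_diff {f : (Fin 3 → ℝ) → ℝ} (hf : ContDiff ℝ 2 f) (i : Fin 3) :
    Differentiable ℝ (pd i f) := by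
  have h1 : ContDiff ℝ 1 (fderiv ℝ f) := hf.fderiv_right (by norm_num)
  exact (h1.clm_apply contDiff_const).differentiable (by norm_num)

theorem pd_symm {f : (Fin 3 → ℝ) → ℝ} (hf : ContDiff ℝ 2 f) (i j : Fin 3) (x : Fin 3 → ℝ) :
    pd i (pd j f) x = pd j (pd i f) x := by
  have hs := (hf.contDiffAt (x := x)).isSymmSndFDerivAt (by simp [minSmoothness_of_isRCLikeNormedField])
  have hd : DifferentiableAt ℝ (fderiv ℝ f) x :=
    ((hf.fderiv_right (m := 1) (by norm_num)).differentiable (by norm_num)) x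
  have key : ∀ u v : Fin 3 → ℝ, fderiv ℝ (fun y => fderiv ℝ f y v) x u
      = fderiv ℝ (fderiv ℝ f) x u v := by
    intro u v
    rw [fderiv_clm_apply hd (differentiableAt_const v)]
    simp
  have e1 : pd j f = fun y => fderiv ℝ f y (Pi.single j 1) := rfl
  have e2 : pd i f = fun y => fderiv ℝ f y (Pi.single i 1) := rfl
  simp only [pd, e1, e2]
  rw [key, key, hs]

theorem pd_comp (φ : Fin 2 → (Fin 3 → ℝ) → ℝ) (hφ : ∀ a, Differentiable ℝ (φ a))
    (Pbar : (Fin 2 → ℝ) → ℝ) (hP : Differentiable ℝ Pbar) (i : Fin 3) (x : Fin 3 → ℝ) :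
    pd i (fun y => Pbar (fun b => φ b y)) x
      = ∑ a : Fin 2, fderiv ℝ Pbar (fun b => φ b x) (Pi.single a 1) * pd i (φ a) x := by
  have hΦd : DifferentiableAt ℝ (fun y (b : Fin 2) => φ b y) x :=
    differentiableAt_pi.2 fun b => (hφ b).differentiableAt
  have hc : pd i (fun y => Pbar (fun b => φ b y)) x
      = fderiv ℝ Pbar (fun b => φ b x) (fderiv ℝ (fun y (b : Fin 2) => φ b y) x (Pi.single i 1)) := by
    have := fderiv_comp x (hP.differentiableAt) hΦd
    simp only [pd]
    rw [show (fun y => Pbar (fun b => φ b y)) = Pbar ∘ (fun y (b : Fin 2) => φ b y) from rfl, this]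
    simp
  rw [hc]
  have hΦ : fderiv ℝ (fun y (b : Fin 2) => φ b y) x (Pi.single i 1)
      = fun b => pd i (φ b) x := by
    rw [fderiv_pi fun b => (hφ b).differentiableAt]
    rfl
  rw [hΦ]
  have hv : (fun b => pd i (φ b) x)
      = pd i (φ 0) x • (Pi.single 0 1 : Fin 2 → ℝ) + pd i (φ 1) x • (Pi.single 1 1 : Fin 2 → ℝ) := by
    funext b; fin_cases b <;> simp
  rw [hv, map_add, map_smul, map_smul, Fin.sum_univ_two]
  simp [smul_eq_mul]; ring

set_option maxHeartbeats 1000000 in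
/-- if `φ : ℝ³ → ℝ²` is `C²` and σ_{1,2}-critical with potential `P̄`
(`κΔφ + τ_{σ₂}(φ) = (∇P̄)∘φ`, `κ ≥ 0`), then `V = ∇φ₁ × ∇φ₂` satisfies the steady forced
Euler equations `(V·∇)V = -∇p + F`, `div V = 0`, with `p = P̄∘φ − ½|V|²` and
`Fᵢ = κ(Σⱼ ∂ⱼCᵢⱼ − ½∂ᵢ|Dφ|²)`; moreover `⟨F, V⟩ = 0` pointwise. -/
theorem stmt10 (κ : ℝ) (hκ : 0 ≤ κ)
    (φ : Fin 2 → (Fin 3 → ℝ) → ℝ) (hφ : ∀ a, ContDiff ℝ 2 (φ a))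
    (Pbar : (Fin 2 → ℝ) → ℝ) (hPbar : ContDiff ℝ 1 Pbar)
    (hcrit : ∀ (a : Fin 2) (x : Fin 3 → ℝ),
      κ * lap (φ a) x + tau2 φ a x = fderiv ℝ Pbar (fun b => φ b x) (Pi.single a 1))
    (p : (Fin 3 → ℝ) → ℝ)
    (hp : p = fun x => Pbar (fun b => φ b x) - (1/2) * ∑ i, (Vfield φ x i) ^ 2)
    (F : Fin 3 → (Fin 3 → ℝ) → ℝ)
    (hF : ∀ i x, F i x
      = κ * ((∑ j : Fin 3, pd j (fun y => CG φ i j y) x) - (1/2) * pd i (fun y => eDen φ y) x)) :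
    (∀ x i, (∑ j, Vfield φ x j * pd j (fun y => Vfield φ y i) x) = - pd i p x + F i x) ∧
    (∀ x, (∑ i, pd i (fun y => Vfield φ y i) x) = 0) ∧
    (∀ x, (∑ i, F i x * Vfield φ x i) = 0) := by
  have hd : ∀ (a : Fin 2) (i : Fin 3), Differentiable ℝ (pd i (φ a)) :=
    fun a i => pd_diff (hφ a) i
  have hsymm : ∀ (a : Fin 2) (i j : Fin 3) (x : Fin 3 → ℝ),
      pd i (pd j (φ a)) x = pd j (pd i (φ a)) x := fun a i j x => pd_symm (hφ a) i j x
  have hdφ : ∀ a, Differentiable ℝ (φ a) := fun a => (hφ a).differentiable (by norm_num)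
  have hdP : Differentiable ℝ Pbar := hPbar.differentiable (by norm_num)
  have hPc : Differentiable ℝ (fun y => Pbar (fun b => φ b y)) :=
    hdP.comp (differentiable_pi.2 fun b => hdφ b)
  have h00 := hd 0 0; have h01 := hd 0 1; have h02 := hd 0 2
  have h10 := hd 1 0; have h11 := hd 1 1; have h12 := hd 1 2
  refine ⟨?_, ?_, ?_⟩
  · -- momentum equation
    intro x i
    rw [hp, hF i x]
    have hch : ∀ i : Fin 3, pd i (fun y => Pbar (fun b => φ b y)) x
        = ∑ a : Fin 2, (κ * lap (φ a) x + tau2 φ a x) * pd i (φ a) x := by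
      intro i
      rw [pd_comp φ hdφ Pbar hdP i x]
      exact Finset.sum_congr rfl fun a _ => by rw [← hcrit a x]
    have hi : i = 0 ∨ i = 1 ∨ i = 2 := by omega
    rcases hi with rfl | rfl | rfl <;>
    · simp only [tau2, lap, eDen, CG, Vfield, cross, Fin.sum_univ_two,
        Fin.sum_univ_three, Matrix.cons_val_zero, Matrix.cons_val_one, Matrix.head_cons,
        Matrix.cons_val_two, Matrix.tail_cons] at hch ⊢
      simp (disch := fun_prop) only [pd_sub, pd_add, pd_mul, pd_sq, pd_const_mul,
        pd_const] at hch ⊢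
      rw [hch _]
      simp only [hsymm 0 1 0, hsymm 0 2 0, hsymm 0 2 1, hsymm 1 1 0, hsymm 1 2 0, hsymm 1 2 1]
      ring
  · -- divergence free
    intro x
    simp only [Vfield, cross, Fin.sum_univ_three, Matrix.cons_val_zero, Matrix.cons_val_one,
      Matrix.head_cons, Matrix.cons_val_two, Matrix.tail_cons]
    simp (disch := fun_prop) only [pd_sub, pd_mul]
    simp only [hsymm 0 1 0, hsymm 0 2 0, hsymm 0 2 1, hsymm 1 1 0, hsymm 1 2 0, hsymm 1 2 1]
    ring
  · -- F ⟂ V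
    intro x
    simp only [hF, Vfield, cross, CG, eDen, Fin.sum_univ_two, Fin.sum_univ_three,
      Matrix.cons_val_zero, Matrix.cons_val_one, Matrix.head_cons,
      Matrix.cons_val_two, Matrix.tail_cons]
    simp (disch := fun_prop) only [pd_sub, pd_add, pd_mul, pd_sq, pd_const_mul, pd_const]
    simp only [hsymm 0 1 0, hsymm 0 2 0, hsymm 0 2 1, hsymm 1 1 0, hsymm 1 2 0, hsymm 1 2 1]
    ring
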